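/- (BPSK asymptotically attains the ultimate Holevo limit at low photon number.) Let g(x) = (1+x) ln(1+x) - x ln x and let h(x) = -x ln x - (1-x) ln(1-x) (binary entropy in nats, 0 ln 0 = 0), so that the BPSK Holevo capacity is C∞(E) = h((1 + e^{-2E})/2). Then lim_{E → 0⁺} ( g(E) - C∞(E) ) / E = 0, i.e. the per-photon gap between the ultimate Holevo capacity and the BPSK Holevo capacity vanishes as E → 0⁺. -/

import Mathlib

open Filter Topology Real

-- slope limits via derivatives

private lemma slope_tendsto {f : ℝ → ℝ} {c : ℝ} (hf : HasDerivAt f c 0) (h0 : f 0 = 0) :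
    Tendsto (fun E : ℝ => f E / E) (𝓝[>] 0) (𝓝 c) := by
  have h := hasDerivAt_iff_tendsto_slope.mp hf
  have h' : Tendsto (slope f 0) (𝓝[>] 0) (𝓝 c) :=
    h.mono_left (nhdsWithin_mono _ (fun x hx => ne_of_gt hx))
  refine h'.congr (fun x => ?_)
  simp [slope, h0, div_eq_inv_mul]

private lemma limA : Tendsto (fun E : ℝ => (1 + E) * (Real.log (1 + E) / E)) (𝓝[>] 0) (𝓝 1) := by
  have hderiv : HasDerivAt (fun x : ℝ => Real.log (1 + x)) 1 0 := by
    have h1 : HasDerivAt (fun x : ℝ => 1 + x) 1 0 := by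
      simpa using (hasDerivAt_id (0:ℝ)).const_add 1
    have := (Real.hasDerivAt_log (by norm_num : (1:ℝ) + 0 ≠ 0)).comp 0 h1
    exact this.congr_deriv (by norm_num)
  have h1 : Tendsto (fun E : ℝ => Real.log (1 + E) / E) (𝓝[>] 0) (𝓝 1) :=
    slope_tendsto hderiv (by simp)
  have h2 : Tendsto (fun E : ℝ => 1 + E) (𝓝[>] 0) (𝓝 1) := by
    have : Tendsto (fun E : ℝ => 1 + E) (𝓝 0) (𝓝 1) := by
      exact (continuous_add_left (1:ℝ)).tendsto' 0 1 (by simp)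
    exact this.mono_left nhdsWithin_le_nhds
  simpa using h2.mul h1

private lemma limB : Tendsto (fun E : ℝ =>
    ((1 + Real.exp (-(2 * E))) / 2) * (Real.log ((1 + Real.exp (-(2 * E))) / 2) / E))
    (𝓝[>] 0) (𝓝 (-1)) := by
  have hg : HasDerivAt (fun x : ℝ => (1 + Real.exp (-(2 * x))) / 2) (-1) 0 := by
    have h1 : HasDerivAt (fun x : ℝ => -(2 * x)) (-2) 0 := by
      exact ((hasDerivAt_id (0:ℝ)).const_mul 2).neg.congr_deriv (by norm_num)
    have h2 := h1.exp
    simp only [mul_zero, neg_zero, Real.exp_zero] at h2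
    have h3 := (h2.const_add 1).div_const 2
    norm_num at h3
    convert h3 using 1
  have hderiv : HasDerivAt (fun x : ℝ => Real.log ((1 + Real.exp (-(2 * x))) / 2)) (-1) 0 := by
    have hlog := Real.hasDerivAt_log (x := (1 + Real.exp (-(2 * (0:ℝ)))) / 2) (by norm_num)
    have := hlog.comp 0 hg
    exact this.congr_deriv (by norm_num)
  have h1 : Tendsto (fun E : ℝ => Real.log ((1 + Real.exp (-(2 * E))) / 2) / E)
      (𝓝[>] 0) (𝓝 (-1)) := slope_tendsto hderiv (by norm_num)
  have h2 : Tendsto (fun E : ℝ => (1 + Real.exp (-(2 * E))) / 2) (𝓝[>] 0) (𝓝 1) := by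
    have : Tendsto (fun E : ℝ => (1 + Real.exp (-(2 * E))) / 2) (𝓝 0) (𝓝 1) := by
      have : Continuous (fun E : ℝ => (1 + Real.exp (-(2 * E))) / 2) := by continuity
      have h := this.tendsto 0
      norm_num at h
      exact h
    exact this.mono_left nhdsWithin_le_nhds
  simpa using h2.mul h1

private lemma limQ : Tendsto (fun E : ℝ => ((1 - Real.exp (-(2 * E))) / 2) / E)
    (𝓝[>] 0) (𝓝 1) := by
  have hg : HasDerivAt (fun x : ℝ => (1 - Real.exp (-(2 * x))) / 2) 1 0 := by
    have h1 : HasDerivAt (fun x : ℝ => -(2 * x)) (-2) 0 := by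
      exact ((hasDerivAt_id (0:ℝ)).const_mul 2).neg.congr_deriv (by norm_num)
    have h2 := h1.exp
    simp only [mul_zero, neg_zero, Real.exp_zero] at h2
    have h3 := ((h2.const_mul (-1)).const_add 1).div_const 2
    norm_num at h3
    exact h3.congr_of_eventuallyEq (Filter.Eventually.of_forall fun x => by ring)
  exact slope_tendsto hg (by norm_num)

-- q bounds: for E > 0, E/(1+2E) ≤ q ≤ E where q = (1-e^{-2E})/2
private lemma q_bounds {E : ℝ} (hE : 0 < E) :
    E / (1 + 2 * E) ≤ (1 - Real.exp (-(2 * E))) / 2 ∧ (1 - Real.exp (-(2 * E))) / 2 ≤ E := by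
  constructor
  · have h1 : (1 : ℝ) + 2 * E ≤ Real.exp (2 * E) := by
      have := Real.add_one_le_exp (2 * E); linarith
    have hpos : (0:ℝ) < 1 + 2 * E := by linarith
    have h2 : Real.exp (-(2 * E)) ≤ 1 / (1 + 2 * E) := by
      rw [Real.exp_neg]
      rw [inv_eq_one_div]
      exact one_div_le_one_div_of_le hpos h1
    have : 1 - 1 / (1 + 2 * E) ≤ 1 - Real.exp (-(2 * E)) := by linarith
    have heq : 1 - 1 / (1 + 2 * E) = 2 * E / (1 + 2 * E) := by
      field_simp
      ring
    rw [heq] at this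
    have heq2 : E / (1 + 2 * E) = (2 * E / (1 + 2 * E)) / 2 := by ring
    rw [heq2]
    linarith
  · have := Real.add_one_le_exp (-(2 * E))
    linarith

private lemma Elog : Tendsto (fun E : ℝ => Real.log E * E) (𝓝[>] 0) (𝓝 0) := by
  have := tendsto_log_mul_rpow_nhdsGT_zero (r := 1) zero_lt_one
  refine this.congr' ?_
  filter_upwards [self_mem_nhdsWithin] with x hx
  simp [Real.rpow_one]

private lemma limD : Tendsto (fun E : ℝ =>
    (((1 - Real.exp (-(2 * E))) / 2) / E - 1) * Real.log E) (𝓝[>] 0) (𝓝 0) := by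
  apply squeeze_zero_norm' (a := fun E => 2 * ‖Real.log E * E‖)
  · filter_upwards [self_mem_nhdsWithin] with E hE
    have hE : 0 < E := hE
    obtain ⟨hlo, hhi⟩ := q_bounds hE
    have hq1 : ((1 - Real.exp (-(2 * E))) / 2) / E ≤ 1 := by
      rw [div_le_one hE]; exact hhi
    have hq2 : 1 - 2 * E ≤ ((1 - Real.exp (-(2 * E))) / 2) / E := by
      have hpos : (0:ℝ) < 1 + 2 * E := by linarith
      have h4 : 1 - 2 * E ≤ 1 / (1 + 2 * E) := by
        rw [le_div_iff₀ hpos]; nlinarith [sq_nonneg E]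
      have h5 : E / (1 + 2 * E) / E = 1 / (1 + 2 * E) := by
        field_simp
      have h6 : E / (1 + 2 * E) / E ≤ ((1 - Real.exp (-(2 * E))) / 2) / E := by
        gcongr
      linarith
    have habs : |((1 - Real.exp (-(2 * E))) / 2) / E - 1| ≤ 2 * E := by
      rw [abs_le]; constructor <;> linarith
    rw [Real.norm_eq_abs, abs_mul, Real.norm_eq_abs, abs_mul, abs_of_pos hE]
    calc |((1 - Real.exp (-(2 * E))) / 2) / E - 1| * |Real.log E|
        ≤ 2 * E * |Real.log E| := by
          apply mul_le_mul_of_nonneg_right habs (abs_nonneg _)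
      _ = 2 * (|Real.log E| * E) := by ring
  · have := Elog.norm
    simpa using this.const_mul 2

open Filter Topology

/-- BPSK asymptotically attains the ultimate Holevo limit at low photon number:
`(g(E) - C∞(E))/E → 0` as `g(E) = (1+E) ln(1+E) - E ln E` and
`C∞(E) = h((1 + e^{-2E})/2)`. -/
theorem bpsk_attains_ultimate_holevo_low_photon :
    Tendsto
      (fun E : ℝ =>
        (((1 + E) * Real.log (1 + E) - E * Real.log E)
          - Real.binEntropy ((1 + Real.exp (-(2 * E))) / 2)) / E)
      (𝓝[>] 0) (𝓝 0) := by
  have key : Tendsto (fun E : ℝ =>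
      (1 + E) * (Real.log (1 + E) / E)
      + ((1 + Real.exp (-(2 * E))) / 2) * (Real.log ((1 + Real.exp (-(2 * E))) / 2) / E)
      + (((1 - Real.exp (-(2 * E))) / 2) / E) * Real.log (((1 - Real.exp (-(2 * E))) / 2) / E)
      + ((((1 - Real.exp (-(2 * E))) / 2) / E - 1) * Real.log E))
      (𝓝[>] 0) (𝓝 0) := by
    have hC : Tendsto (fun E : ℝ =>
        (((1 - Real.exp (-(2 * E))) / 2) / E) * Real.log (((1 - Real.exp (-(2 * E))) / 2) / E))
        (𝓝[>] 0) (𝓝 0) := by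
      have hcont : Tendsto (fun x : ℝ => x * Real.log x) (𝓝 1) (𝓝 0) := by
        have := Real.continuous_mul_log.tendsto 1
        simpa using this
      exact (hcont.comp limQ)
    have := ((limA.add limB).add hC).add limD
    norm_num at this
    exact this
  refine key.congr' ?_
  filter_upwards [self_mem_nhdsWithin] with E hE
  have hE : 0 < E := hE
  have hexp : Real.exp (-(2 * E)) < 1 := by
    rw [Real.exp_lt_one_iff]; linarith
  have hq : 0 < (1 - Real.exp (-(2 * E))) / 2 := by linarith
  have hp : 0 < (1 + Real.exp (-(2 * E))) / 2 := by positivity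
  set q := (1 - Real.exp (-(2 * E))) / 2 with hqdef
  set p := (1 + Real.exp (-(2 * E))) / 2 with hpdef
  have h1p : 1 - p = q := by rw [hqdef, hpdef]; ring
  have hbin : Real.binEntropy p = -(p * Real.log p) - q * Real.log q := by
    rw [Real.binEntropy, h1p, Real.log_inv, Real.log_inv]; ring
  have hlogq : Real.log q = Real.log (q / E) + Real.log E := by
    rw [← Real.log_mul (by positivity) (ne_of_gt hE)]
    congr 1
    field_simp
  rw [hbin, hlogq]
  field_simp
  ring
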